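/- Let n ≥ 3, p ≥ 1 with 2p < n, and set c := ((n−2)² − 4p(p−1))/(4p(n−1)(n−2)). Let Ric be a real symmetric n×n matrix with R := trace(Ric), assume R ≤ 0 and that the matrix Ric − c·R·Id is positive semidefinite, and let α be a totally antisymmetric map on p-tuples of indices from {1,…,n}. Then (p(n−2p)/(n−2))·∑_{i,j,i₂,…,i_p=1}^{n} Ric_{ij} α(i,i₂,…,i_p) α(j,i₂,…,i_p) + (p(p−1)/((n−1)(n−2)))·R·|α|² ≥ ((n−2)/(4(n−1)))·R·|α|². -/

import Mathlib

/-- The pointwise algebraic core of inequality (4.24) in Theorem 4.8: with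
`c = ((n-2)² - 4p(p-1))/(4p(n-1)(n-2))`, if `R ≤ 0` and `Ric - c R Id` is
positive semidefinite, then the curvature term of the Weitzenböck formula
for a harmonic `p`-form is at least `((n-2)/(4(n-1))) R |α|²`. -/
theorem stmt_11 (n p : ℕ) (hn : 3 ≤ n) (hp : 1 ≤ p) (hpn : 2 * p < n)
    (Ric : Matrix (Fin n) (Fin n) ℝ) (hsymm : ∀ i j, Ric i j = Ric j i)
    (hRneg : ∑ m, Ric m m ≤ 0)
    (hpsd : (Ric -
        (((((n : ℝ) - 2) ^ 2 - 4 * (p : ℝ) * ((p : ℝ) - 1)) /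
            (4 * (p : ℝ) * ((n : ℝ) - 1) * ((n : ℝ) - 2))) * (∑ m, Ric m m)) •
          (1 : Matrix (Fin n) (Fin n) ℝ)).PosSemidef)
    (α : (Fin p → Fin n) → ℝ)
    (hanti : ∀ (I : Fin p → Fin n) (k l : Fin p), k ≠ l →
      α (I ∘ Equiv.swap k l) = -α I) :
    ((p : ℝ) * ((n : ℝ) - 2 * (p : ℝ)) / ((n : ℝ) - 2)) *
        (∑ I : Fin p → Fin n, ∑ j : Fin n,
          Ric (I ⟨0, hp⟩) j * α I * α (Function.update I ⟨0, hp⟩ j)) +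
      ((p : ℝ) * ((p : ℝ) - 1) / (((n : ℝ) - 1) * ((n : ℝ) - 2))) *
        (∑ m, Ric m m) * ∑ I : Fin p → Fin n, (α I) ^ 2 ≥
    (((n : ℝ) - 2) / (4 * ((n : ℝ) - 1))) * (∑ m, Ric m m) *
      ∑ I : Fin p → Fin n, (α I) ^ 2 := by
  set R : ℝ := ∑ m, Ric m m with hR
  set c : ℝ := (((n : ℝ) - 2) ^ 2 - 4 * (p : ℝ) * ((p : ℝ) - 1)) /
      (4 * (p : ℝ) * ((n : ℝ) - 1) * ((n : ℝ) - 2)) with hc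
  set N : ℝ := ∑ I : Fin p → Fin n, (α I) ^ 2 with hN
  have hNpos : 0 ≤ N := Finset.sum_nonneg fun I _ => sq_nonneg _
  -- quadratic form lower bound
  have hq : ∀ v : Fin n → ℝ, c * R * (∑ i, v i ^ 2) ≤ ∑ i, ∑ j, Ric i j * v i * v j := by
    intro v
    have h := (Matrix.posSemidef_iff_dotProduct_mulVec.mp hpsd).2 v
    simp only [dotProduct, Matrix.mulVec, star_trivial, Finset.mul_sum] at h
    have key : ∀ i : Fin n, ∑ j, v i * ((Ric - (c*R) • 1) i j * v j)
        = (∑ j, Ric i j * v i * v j) - c * R * v i ^ 2 := by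
      intro i
      have h1 : ∀ j, v i * ((Ric - (c*R) • 1) i j * v j)
          = Ric i j * v i * v j - (if i = j then c * R * (v i * v j) else 0) := by
        intro j
        simp only [Matrix.sub_apply, Matrix.smul_apply, Matrix.one_apply, smul_eq_mul]
        split_ifs <;> ring
      rw [Finset.sum_congr rfl (fun j _ => h1 j), Finset.sum_sub_distrib,
        Finset.sum_ite_eq Finset.univ i (fun j => c * R * (v i * v j))]
      rw [if_pos (Finset.mem_univ i)]; ring
    rw [Finset.sum_congr rfl (fun i _ => key i), Finset.sum_sub_distrib,
      ← Finset.mul_sum] at h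
    linarith
  -- reindexing via splitting off the first coordinate
  set p0 : Fin p := ⟨0, hp⟩ with hp0
  set e := Equiv.funSplitAt p0 (Fin n) with he
  have hfa : ∀ (t : {j : Fin p // j ≠ p0} → Fin n) (i : Fin n),
      (e.symm (i, t)) p0 = i := by
    intro t i; simp [he, Equiv.funSplitAt, Equiv.piSplitAt]
  have hfb : ∀ (t : {j : Fin p // j ≠ p0} → Fin n) (i j : Fin n),
      Function.update (e.symm (i, t)) p0 j = e.symm (j, t) := by
    intro t i j
    funext k
    by_cases hk : k = p0
    · subst hk; simp [he, Equiv.funSplitAt, Equiv.piSplitAt]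
    · simp [Function.update, hk, he, Equiv.funSplitAt, Equiv.piSplitAt]
  have hNsplit : N = ∑ t : {j : Fin p // j ≠ p0} → Fin n,
      ∑ i : Fin n, (α (e.symm (i, t))) ^ 2 := by
    rw [hN, ← Equiv.sum_comp e.symm (fun I => (α I) ^ 2), Fintype.sum_prod_type,
      Finset.sum_comm]
  have hSsplit : (∑ I : Fin p → Fin n, ∑ j : Fin n,
        Ric (I p0) j * α I * α (Function.update I p0 j))
      = ∑ t : {j : Fin p // j ≠ p0} → Fin n, ∑ i : Fin n, ∑ j : Fin n,
          Ric i j * α (e.symm (i, t)) * α (e.symm (j, t)) := by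
    rw [← Equiv.sum_comp e.symm (fun I => ∑ j : Fin n,
        Ric (I p0) j * α I * α (Function.update I p0 j)), Fintype.sum_prod_type,
      Finset.sum_comm]
    refine Finset.sum_congr rfl fun t _ => Finset.sum_congr rfl fun i _ =>
      Finset.sum_congr rfl fun j _ => ?_
    rw [hfa, hfb]
  have hS : c * R * N ≤ ∑ I : Fin p → Fin n, ∑ j : Fin n,
      Ric (I p0) j * α I * α (Function.update I p0 j) := by
    rw [hSsplit, hNsplit, Finset.mul_sum]
    exact Finset.sum_le_sum fun t _ => hq (fun i => α (e.symm (i, t)))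
  set S : ℝ := ∑ I : Fin p → Fin n, ∑ j : Fin n,
      Ric (I p0) j * α I * α (Function.update I p0 j) with hSdef
  -- arithmetic conclusion
  have hp1 : (1:ℝ) ≤ (p:ℝ) := by exact_mod_cast hp
  have hnp : 2 * (p:ℝ) + 1 ≤ (n:ℝ) := by exact_mod_cast hpn
  have hn3 : (3:ℝ) ≤ (n:ℝ) := by exact_mod_cast hn
  have d1 : (0:ℝ) < (n:ℝ) - 2 := by linarith
  have d2 : (0:ℝ) < (n:ℝ) - 1 := by linarith
  have d3 : (0:ℝ) < (p:ℝ) := by linarith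
  set A : ℝ := (p : ℝ) * ((n : ℝ) - 2 * (p : ℝ)) / ((n : ℝ) - 2) with hA
  set B : ℝ := (p : ℝ) * ((p : ℝ) - 1) / (((n : ℝ) - 1) * ((n : ℝ) - 2)) with hB
  set D : ℝ := ((n : ℝ) - 2) / (4 * ((n : ℝ) - 1)) with hD
  have hApos : 0 ≤ A := by
    apply div_nonneg <;> nlinarith
  have hEdiff : D - (A * c + B) = (((p:ℝ) - 1) * (((n:ℝ) - 2) ^ 2 - 4 * (p:ℝ) * ((p:ℝ) - 1)))
      / (2 * ((n:ℝ) - 1) * ((n:ℝ) - 2) ^ 2) := by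
    rw [hA, hB, hD, hc]
    field_simp
    ring
  have hnum : 0 ≤ (((p:ℝ) - 1) * (((n:ℝ) - 2) ^ 2 - 4 * (p:ℝ) * ((p:ℝ) - 1))) := by
    apply mul_nonneg <;> nlinarith
  have hden : (0:ℝ) < 2 * ((n:ℝ) - 1) * ((n:ℝ) - 2) ^ 2 :=
    mul_pos (mul_pos (by norm_num) d2) (pow_pos d1 2)
  have hE : A * c + B ≤ D := by
    have := div_nonneg hnum hden.le
    linarith [hEdiff ▸ this]
  have hRN : R * N ≤ 0 := mul_nonpos_of_nonpos_of_nonneg hRneg hNpos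
  have h1 : A * (c * R * N) ≤ A * S := mul_le_mul_of_nonneg_left hS hApos
  have h2 : D * (R * N) ≤ (A * c + B) * (R * N) := mul_le_mul_of_nonpos_right hE hRN
  calc D * R * N = D * (R * N) := by ring
    _ ≤ (A * c + B) * (R * N) := h2
    _ = A * (c * R * N) + B * (R * N) := by ring
    _ ≤ A * S + B * (R * N) := by linarith
    _ = A * S + B * R * N := by ring
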